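/- arXiv:2010.13599 — 2 statements merged into one kernel-verified Lean document; each statement's English description precedes it below -/
import Mathlib

section
/- Variance bound for the Horvitz–Thompson estimator (Lemma 2): Given a dependency structure B, the variance of the Horvitz–Thompson estimator satisfies Var(τ̂) ≤ (1/(N²p)) Σ_{i=1}^N E[(μ_i^{(1)}(Z))²] + (1/(N²(1−p))) Σ_{i=1}^N E[(μ_i^{(0)}(Z))²] + (1/N²) Σ_{i=1}^N Σ_{j∈B(i), j≠i} Σ_{a∈{0,1}} Σ_{b∈{0,1}} (−1)^{a+b} ( E[μ_i(Z[i:=a][j:=b]) μ_j(Z[i:=a][j:=b])] − E[μ_i^{(a)}(Z)] E[μ_j^{(b)}(Z)] ). -/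
/-- Expectation with respect to the Bernoulli(p) product measure on `{0,1}^N`. -/
noncomputable def bexp {N : ℕ} (p : ℝ) (f : (Fin N → Bool) → ℝ) : ℝ :=
  ∑ z : Fin N → Bool, (∏ i, if z i then p else 1 - p) * f z

/-- Variance under the Bernoulli(p) product measure. -/
noncomputable def bvar {N : ℕ} (p : ℝ) (f : (Fin N → Bool) → ℝ) : ℝ :=
  bexp p (fun z => (f z) ^ 2) - (bexp p f) ^ 2

/-- Covariance under the Bernoulli(p) product measure. -/
noncomputable def bcov {N : ℕ} (p : ℝ) (f g : (Fin N → Bool) → ℝ) : ℝ :=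
  bexp p (fun z => f z * g z) - bexp p f * bexp p g

/-- `(−1)^a` for `a ∈ {0,1}` (with `true ↦ −1`, `false ↦ 1`). -/
def sgn (a : Bool) : ℝ := if a then -1 else 1

/-- A dependency structure: `B i` contains `i`, and for `j ∉ B i` the circle averages
`μ_i`, `μ_j` do not depend on each other's treatment coordinate and the marginalized
circle averages are uncorrelated. -/
def DepStruct {N : ℕ} (p : ℝ) (μ : Fin N → (Fin N → Bool) → ℝ)
    (B : Fin N → Finset (Fin N)) : Prop :=
  (∀ i, i ∈ B i) ∧
  ∀ i j : Fin N, j ∉ B i →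
    (∀ z : Fin N → Bool, μ i (Function.update z j false) = μ i (Function.update z j true)) ∧
    (∀ z : Fin N → Bool, μ j (Function.update z i false) = μ j (Function.update z i true)) ∧
    (∀ a b : Bool, bcov p (fun z => μ i (Function.update z i a))
        (fun z => μ j (Function.update z j b)) = 0)

/-- Horvitz–Thompson estimator. -/
noncomputable def ht (N : ℕ) (p : ℝ) (μ : Fin N → (Fin N → Bool) → ℝ)
    (z : Fin N → Bool) : ℝ :=
  (1 / (N * p)) * ∑ i, (if z i then (1 : ℝ) else 0) * μ i z
    - (1 / (N * (1 - p))) * ∑ i, (1 - if z i then (1 : ℝ) else 0) * μ i z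

/-! ### Auxiliary lemmas -/

lemma bexp_core {N : ℕ} (p : ℝ) (i : Fin N) (G : (Fin N → Bool) → ℝ)
    (hG : ∀ z b, G (Function.update z i b) = G z) :
    ∑ z : Fin N → Bool, (∏ j, if z j then p else 1 - p) *
      ((((if z i then 1 else 0) : ℝ) - p) * G z) = 0 := by
  apply Finset.sum_ninvolution (fun z => Function.update z i (!(z i)))
  · intro z
    have hsplit : ∀ w : Fin N → Bool, (∏ j, if w j then p else 1 - p) =
        (if w i then p else 1 - p) * ∏ j ∈ Finset.univ.erase i, (if w j then p else 1 - p) :=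
      fun w => (Finset.mul_prod_erase _ _ (Finset.mem_univ i)).symm
    have hprod : (∏ j ∈ Finset.univ.erase i, (if Function.update z i (!(z i)) j then p else 1 - p))
        = ∏ j ∈ Finset.univ.erase i, (if z j then p else 1 - p) := by
      refine Finset.prod_congr rfl fun j hj => ?_
      rw [Function.update_of_ne (Finset.ne_of_mem_erase hj)]
    have hGz : G (Function.update z i (!(z i))) = G z := hG z _
    rw [hsplit z, hsplit (Function.update z i (!(z i))), hprod, hGz,
      Function.update_self]
    cases hz : z i <;> simp [hz] <;> ring
  · intro z _ hc
    have := congrFun hc i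
    simp at this
  · intro z; exact Finset.mem_univ _
  · intro z
    funext j
    by_cases hj : j = i
    · subst hj; simp
    · simp [Function.update_of_ne hj]

lemma bexp_ind {N : ℕ} (p : ℝ) (i : Fin N) (v : Bool → ℝ) (h : (Fin N → Bool) → ℝ)
    (hh : ∀ z b, h (Function.update z i b) = h z) :
    bexp p (fun z => v (z i) * h z) = (p * v true + (1 - p) * v false) * bexp p h := by
  have hcore := bexp_core p i h hh
  have h1 : ∑ z : Fin N → Bool, (∏ j, if z j then p else 1 - p) *
      (((if z i then 1 else 0) : ℝ) * h z) = p * bexp p h := by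
    have e : (∑ z : Fin N → Bool, (∏ j, if z j then p else 1 - p) *
        (((if z i then 1 else 0) : ℝ) * h z)) - p * bexp p h
        = ∑ z : Fin N → Bool, (∏ j, if z j then p else 1 - p) *
          ((((if z i then 1 else 0) : ℝ) - p) * h z) := by
      rw [bexp, Finset.mul_sum, ← Finset.sum_sub_distrib]
      exact Finset.sum_congr rfl fun z _ => by ring
    have := e.trans hcore
    linarith
  have h2 : ∀ z : Fin N → Bool, v (z i) = (v true - v false) * (if z i then 1 else 0) + v false := by
    intro z; cases hz : z i <;> simp
  calc bexp p (fun z => v (z i) * h z)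
      = ∑ z : Fin N → Bool, ((v true - v false) * ((∏ j, if z j then p else 1 - p) *
          (((if z i then 1 else 0) : ℝ) * h z))
          + v false * ((∏ j, if z j then p else 1 - p) * h z)) := by
        refine Finset.sum_congr rfl fun z _ => ?_
        have := h2 z
        simp only [this]
        ring
    _ = (v true - v false) * (p * bexp p h) + v false * bexp p h := by
        rw [Finset.sum_add_distrib, ← Finset.mul_sum, ← Finset.mul_sum, h1, bexp]
    _ = (p * v true + (1 - p) * v false) * bexp p h := by ring

lemma bexp_add {N : ℕ} (p : ℝ) (f g : (Fin N → Bool) → ℝ) :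
    bexp p (fun z => f z + g z) = bexp p f + bexp p g := by
  simp [bexp, mul_add, Finset.sum_add_distrib]

lemma bexp_smul {N : ℕ} (p c : ℝ) (f : (Fin N → Bool) → ℝ) :
    bexp p (fun z => c * f z) = c * bexp p f := by
  rw [bexp, bexp, Finset.mul_sum]
  exact Finset.sum_congr rfl fun z _ => by ring

lemma bexp_sum {N : ℕ} (p : ℝ) {α : Type*} (s : Finset α) (F : α → (Fin N → Bool) → ℝ) :
    bexp p (fun z => ∑ i ∈ s, F i z) = ∑ i ∈ s, bexp p (F i) := by
  simp only [bexp, Finset.mul_sum]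
  exact Finset.sum_comm

lemma bexp_congr {N : ℕ} (p : ℝ) (f g : (Fin N → Bool) → ℝ) (h : ∀ z, f z = g z) :
    bexp p f = bexp p g := by
  congr 1; funext z; exact h z

lemma bexp_split {N : ℕ} (p : ℝ) (i : Fin N) (f g : (Fin N → Bool) → ℝ)
    (hf : ∀ z b, f (Function.update z i b) = f z)
    (hg : ∀ z b, g (Function.update z i b) = g z) :
    bexp p (fun z => if z i then f z else g z) = p * bexp p f + (1 - p) * bexp p g := by
  have e1 := bexp_ind p i (fun b => if b then (1 : ℝ) else 0) f hf
  have e2 := bexp_ind p i (fun b => if b then (0 : ℝ) else 1) g hg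
  norm_num at e1 e2
  calc bexp p (fun z => if z i then f z else g z)
      = bexp p (fun z => if z i then f z else 0)
        + bexp p (fun z => if z i then (0:ℝ) else g z) := by
        rw [← bexp_add]
        exact bexp_congr _ _ _ fun z => by cases hz : z i <;> simp [hz]
    _ = p * bexp p f + (1 - p) * bexp p g := by
        rw [e1, e2]

lemma bexp_split2 {N : ℕ} (p : ℝ) {i j : Fin N} (hij : i ≠ j)
    (f11 f10 f01 f00 : (Fin N → Bool) → ℝ)
    (h11i : ∀ z b, f11 (Function.update z i b) = f11 z)
    (h11j : ∀ z b, f11 (Function.update z j b) = f11 z)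
    (h10i : ∀ z b, f10 (Function.update z i b) = f10 z)
    (h10j : ∀ z b, f10 (Function.update z j b) = f10 z)
    (h01i : ∀ z b, f01 (Function.update z i b) = f01 z)
    (h01j : ∀ z b, f01 (Function.update z j b) = f01 z)
    (h00i : ∀ z b, f00 (Function.update z i b) = f00 z)
    (h00j : ∀ z b, f00 (Function.update z j b) = f00 z) :
    bexp p (fun z => if z i then (if z j then f11 z else f10 z)
        else (if z j then f01 z else f00 z))
      = p * (p * bexp p f11 + (1 - p) * bexp p f10)
        + (1 - p) * (p * bexp p f01 + (1 - p) * bexp p f00) := by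
  calc bexp p (fun z => if z i then (if z j then f11 z else f10 z)
        else (if z j then f01 z else f00 z))
      = p * bexp p (fun z => if z j then f11 z else f10 z)
        + (1 - p) * bexp p (fun z => if z j then f01 z else f00 z) := by
        refine bexp_split p i _ _ ?_ ?_ <;> intro z b <;>
          simp only [Function.update_of_ne (Ne.symm hij)]
        · rw [h11i, h10i]
        · rw [h01i, h00i]
    _ = p * (p * bexp p f11 + (1 - p) * bexp p f10)
        + (1 - p) * (p * bexp p f01 + (1 - p) * bexp p f00) := by
        rw [bexp_split p j _ _ h11j h10j, bexp_split p j _ _ h01j h00j]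

/-- Summand of the Horvitz–Thompson estimator. -/
noncomputable def htF {N : ℕ} (p : ℝ) (μ : Fin N → (Fin N → Bool) → ℝ) (i : Fin N)
    (z : Fin N → Bool) : ℝ :=
  if z i then (1 / (N * p)) * μ i (Function.update z i true)
  else -(1 / (N * (1 - p))) * μ i (Function.update z i false)

lemma update_self_of_eq {N : ℕ} {z : Fin N → Bool} {i : Fin N} {a : Bool} (h : z i = a) :
    Function.update z i a = z := by
  rw [← h]; exact Function.update_eq_self i z

lemma ht_eq_sum {N : ℕ} (p : ℝ) (μ : Fin N → (Fin N → Bool) → ℝ) (z : Fin N → Bool) :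
    ht N p μ z = ∑ i, htF p μ i z := by
  rw [ht, Finset.mul_sum, Finset.mul_sum, ← Finset.sum_sub_distrib]
  refine Finset.sum_congr rfl fun i _ => ?_
  unfold htF
  by_cases hz : z i
  · rw [if_pos hz, update_self_of_eq hz]
    simp [hz]
  · rw [if_neg hz, update_self_of_eq (by simpa using hz : z i = false)]
    simp [hz]
    try ring

lemma g_inv {N : ℕ} (μ : Fin N → (Fin N → Bool) → ℝ) (i : Fin N) (a : Bool) :
    ∀ (z : Fin N → Bool) (b : Bool),
      μ i (Function.update (Function.update z i b) i a) = μ i (Function.update z i a) := by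
  intro z b; rw [Function.update_idem]

lemma bexp_htF {N : ℕ} (p : ℝ) (μ : Fin N → (Fin N → Bool) → ℝ) (i : Fin N) :
    bexp p (htF p μ i)
      = p * ((1 / (N * p)) * bexp p (fun z => μ i (Function.update z i true)))
        + (1 - p) * (-(1 / (N * (1 - p))) * bexp p (fun z => μ i (Function.update z i false))) := by
  calc bexp p (htF p μ i)
      = p * bexp p (fun z => (1 / (N * p)) * μ i (Function.update z i true))
        + (1 - p) * bexp p (fun z => -(1 / (N * (1 - p))) * μ i (Function.update z i false)) := by
        refine bexp_split p i _ _ ?_ ?_ <;> intro z b <;> simp only [Function.update_idem]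
    _ = _ := by rw [bexp_smul, bexp_smul]

lemma bexp_htF_sq {N : ℕ} (p : ℝ) (μ : Fin N → (Fin N → Bool) → ℝ) (i : Fin N) :
    bexp p (fun z => htF p μ i z * htF p μ i z)
      = p * ((1 / (N * p))^2 * bexp p (fun z => (μ i (Function.update z i true))^2))
        + (1 - p) * ((1 / (N * (1 - p)))^2
            * bexp p (fun z => (μ i (Function.update z i false))^2)) := by
  calc bexp p (fun z => htF p μ i z * htF p μ i z)
      = bexp p (fun z => if z i then (1 / (N * p))^2 * (μ i (Function.update z i true))^2
          else (1 / (N * (1 - p)))^2 * (μ i (Function.update z i false))^2) := by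
        refine bexp_congr _ _ _ fun z => ?_
        unfold htF
        cases hz : z i <;> simp [hz] <;> ring
    _ = p * bexp p (fun z => (1 / (N * p))^2 * (μ i (Function.update z i true))^2)
        + (1 - p) * bexp p (fun z => (1 / (N * (1 - p)))^2 * (μ i (Function.update z i false))^2) := by
        refine bexp_split p i _ _ ?_ ?_ <;> intro z b <;> simp only [Function.update_idem]
    _ = _ := by rw [bexp_smul, bexp_smul]

lemma bexp_htF_mul {N : ℕ} (p : ℝ) (μ : Fin N → (Fin N → Bool) → ℝ) {i j : Fin N}
    (hij : i ≠ j) :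
    bexp p (fun z => htF p μ i z * htF p μ j z)
      = p * (p * ((1 / (N * p)) * (1 / (N * p))
            * bexp p (fun z => μ i (Function.update (Function.update z i true) j true)
                * μ j (Function.update (Function.update z i true) j true)))
          + (1 - p) * (-((1 / (N * p)) * (1 / (N * (1 - p))))
            * bexp p (fun z => μ i (Function.update (Function.update z i true) j false)
                * μ j (Function.update (Function.update z i true) j false))))
        + (1 - p) * (p * (-((1 / (N * (1 - p))) * (1 / (N * p)))
            * bexp p (fun z => μ i (Function.update (Function.update z i false) j true)
                * μ j (Function.update (Function.update z i false) j true)))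
          + (1 - p) * ((1 / (N * (1 - p))) * (1 / (N * (1 - p)))
            * bexp p (fun z => μ i (Function.update (Function.update z i false) j false)
                * μ j (Function.update (Function.update z i false) j false)))) := by
  have hinvi : ∀ (a b : Bool) (z : Fin N → Bool) (c : Bool),
      μ i (Function.update (Function.update (Function.update z i c) i a) j b)
        * μ j (Function.update (Function.update (Function.update z i c) i a) j b)
      = μ i (Function.update (Function.update z i a) j b)
        * μ j (Function.update (Function.update z i a) j b) := by
    intro a b z c; rw [Function.update_idem]
  have hinvj : ∀ (a b : Bool) (z : Fin N → Bool) (c : Bool),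
      μ i (Function.update (Function.update (Function.update z j c) i a) j b)
        * μ j (Function.update (Function.update (Function.update z j c) i a) j b)
      = μ i (Function.update (Function.update z i a) j b)
        * μ j (Function.update (Function.update z i a) j b) := by
    intro a b z c
    rw [Function.update_comm (Ne.symm hij), Function.update_idem,
      Function.update_comm hij]
  calc bexp p (fun z => htF p μ i z * htF p μ j z)
      = bexp p (fun z => if z i then
          (if z j then ((1 / (N * p)) * (1 / (N * p)))
              * (μ i (Function.update (Function.update z i true) j true)
                * μ j (Function.update (Function.update z i true) j true))
            else (-((1 / (N * p)) * (1 / (N * (1 - p)))))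
              * (μ i (Function.update (Function.update z i true) j false)
                * μ j (Function.update (Function.update z i true) j false)))
          else
          (if z j then (-((1 / (N * (1 - p))) * (1 / (N * p))))
              * (μ i (Function.update (Function.update z i false) j true)
                * μ j (Function.update (Function.update z i false) j true))
            else (((1 / (N * (1 - p))) * (1 / (N * (1 - p)))))
              * (μ i (Function.update (Function.update z i false) j false)
                * μ j (Function.update (Function.update z i false) j false)))) := by
        refine bexp_congr _ _ _ fun z => ?_
        unfold htF
        have hji : j ≠ i := Ne.symm hij
        cases hz : z i <;> cases hz' : z j <;>
          simp only [hz, hz', Bool.false_eq_true, if_true, if_false, reduceIte,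
            update_self_of_eq hz, update_self_of_eq hz'] <;> ring
    _ = _ := by
        rw [bexp_split2 p hij _ _ _ _
          (fun z c => by rw [hinvi]) (fun z c => by rw [hinvj])
          (fun z c => by rw [hinvi]) (fun z c => by rw [hinvj])
          (fun z c => by rw [hinvi]) (fun z c => by rw [hinvj])
          (fun z c => by rw [hinvi]) (fun z c => by rw [hinvj])]
        rw [bexp_smul, bexp_smul, bexp_smul, bexp_smul]


/-- Variance bound for the Horvitz–Thompson estimator (Lemma 2). -/
theorem ht_variance_bound (N : ℕ) (hN : 1 ≤ N) (p : ℝ) (hp0 : 0 < p) (hp1 : p < 1)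
    (μ : Fin N → (Fin N → Bool) → ℝ) (B : Fin N → Finset (Fin N))
    (hB : DepStruct p μ B) :
    bvar p (ht N p μ)
      ≤ (1 / ((N : ℝ) ^ 2 * p)) * ∑ i, bexp p (fun z => (μ i (Function.update z i true)) ^ 2)
        + (1 / ((N : ℝ) ^ 2 * (1 - p))) *
            ∑ i, bexp p (fun z => (μ i (Function.update z i false)) ^ 2)
        + (1 / (N : ℝ) ^ 2) * ∑ i, ∑ j ∈ (B i).erase i, ∑ a : Bool, ∑ b : Bool,
            sgn a * sgn b *
              (bexp p (fun z =>
                  μ i (Function.update (Function.update z i a) j b)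
                    * μ j (Function.update (Function.update z i a) j b))
                - bexp p (fun z => μ i (Function.update z i a))
                    * bexp p (fun z => μ j (Function.update z j b))) := by
  obtain ⟨hBmem, hBdep⟩ := hB
  have hNpos : (0:ℝ) < N := by exact_mod_cast Nat.lt_of_lt_of_le Nat.zero_lt_one hN
  have hN0 : (N:ℝ) ≠ 0 := ne_of_gt hNpos
  have hpne : p ≠ 0 := ne_of_gt hp0
  have hq : (0:ℝ) < 1 - p := by linarith
  have hqne : (1:ℝ) - p ≠ 0 := ne_of_gt hq
  -- Step A : variance decomposition into covariances
  have hsq : bexp p (fun z => (ht N p μ z)^2)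
      = ∑ i : Fin N, ∑ j : Fin N, bexp p (fun z => htF p μ i z * htF p μ j z) := by
    rw [show (fun z => (ht N p μ z)^2)
        = fun z => ∑ i : Fin N, ∑ j : Fin N, htF p μ i z * htF p μ j z from
      funext fun z => by rw [ht_eq_sum p μ z, sq, Finset.sum_mul_sum]]
    rw [bexp_sum]
    exact Finset.sum_congr rfl fun i _ => bexp_sum p Finset.univ _
  have hmean : bexp p (ht N p μ) = ∑ i, bexp p (htF p μ i) := by
    rw [show ht N p μ = fun z => ∑ i, htF p μ i z from funext fun z => ht_eq_sum p μ z]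
    exact bexp_sum p Finset.univ _
  have hvar : bvar p (ht N p μ)
      = ∑ i : Fin N, ∑ j : Fin N, (bexp p (fun z => htF p μ i z * htF p μ j z)
          - bexp p (htF p μ i) * bexp p (htF p μ j)) := by
    rw [bvar, hsq, hmean, sq, Finset.sum_mul_sum, ← Finset.sum_sub_distrib]
    exact Finset.sum_congr rfl fun i _ => (Finset.sum_sub_distrib _ _).symm
  rw [hvar, Finset.mul_sum, Finset.mul_sum, Finset.mul_sum,
    ← Finset.sum_add_distrib, ← Finset.sum_add_distrib]
  refine Finset.sum_le_sum fun i _ => ?_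
  rw [← Finset.add_sum_erase Finset.univ _ (Finset.mem_univ i)]
  -- diagonal bound
  have hdiag : bexp p (fun z => htF p μ i z * htF p μ i z)
      - bexp p (htF p μ i) * bexp p (htF p μ i)
      ≤ 1 / ((N:ℝ)^2 * p) * bexp p (fun z => (μ i (Function.update z i true))^2)
        + 1 / ((N:ℝ)^2 * (1 - p)) * bexp p (fun z => (μ i (Function.update z i false))^2) := by
    have h1 := bexp_htF_sq p μ i
    have h2 : p * ((1 / ((N:ℝ) * p))^2 * bexp p (fun z => (μ i (Function.update z i true))^2))
        = 1 / ((N:ℝ)^2 * p) * bexp p (fun z => (μ i (Function.update z i true))^2) := by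
      field_simp
    have h3 : (1 - p) * ((1 / ((N:ℝ) * (1 - p)))^2
          * bexp p (fun z => (μ i (Function.update z i false))^2))
        = 1 / ((N:ℝ)^2 * (1 - p)) * bexp p (fun z => (μ i (Function.update z i false))^2) := by
      field_simp
    nlinarith [mul_self_nonneg (bexp p (htF p μ i))]
  -- cross terms
  have hcross : ∑ j ∈ Finset.univ.erase i, (bexp p (fun z => htF p μ i z * htF p μ j z)
        - bexp p (htF p μ i) * bexp p (htF p μ j))
      = 1 / (N:ℝ)^2 * ∑ j ∈ (B i).erase i, ∑ a : Bool, ∑ b : Bool,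
          sgn a * sgn b *
            (bexp p (fun z =>
                μ i (Function.update (Function.update z i a) j b)
                  * μ j (Function.update (Function.update z i a) j b))
              - bexp p (fun z => μ i (Function.update z i a))
                  * bexp p (fun z => μ j (Function.update z j b))) := by
    have hformula : ∀ j ∈ Finset.univ.erase i,
        (bexp p (fun z => htF p μ i z * htF p μ j z)
          - bexp p (htF p μ i) * bexp p (htF p μ j))
        = 1 / (N:ℝ)^2 * ∑ a : Bool, ∑ b : Bool,
            sgn a * sgn b *
              (bexp p (fun z =>
                  μ i (Function.update (Function.update z i a) j b)
                    * μ j (Function.update (Function.update z i a) j b))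
                - bexp p (fun z => μ i (Function.update z i a))
                    * bexp p (fun z => μ j (Function.update z j b))) := by
      intro j hj
      have hij : i ≠ j := (Finset.mem_erase.1 hj).1.symm
      rw [bexp_htF_mul p μ hij, bexp_htF p μ i, bexp_htF p μ j]
      simp only [Fintype.sum_bool, sgn, if_true, if_false, Bool.false_eq_true, reduceIte]
      field_simp
      ring
    have hvanish : ∀ j ∈ Finset.univ.erase i, j ∉ (B i).erase i →
        (1 / (N:ℝ)^2 * ∑ a : Bool, ∑ b : Bool,
          sgn a * sgn b *
            (bexp p (fun z =>
                μ i (Function.update (Function.update z i a) j b)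
                  * μ j (Function.update (Function.update z i a) j b))
              - bexp p (fun z => μ i (Function.update z i a))
                  * bexp p (fun z => μ j (Function.update z j b)))) = 0 := by
      intro j hj hnot
      have hji : j ≠ i := (Finset.mem_erase.1 hj).1
      have hij : i ≠ j := hji.symm
      have hjB : j ∉ B i := fun h => hnot (Finset.mem_erase.2 ⟨hji, h⟩)
      obtain ⟨hdep1, hdep2, hdep3⟩ := hBdep i j hjB
      have hμi : ∀ (w : Fin N → Bool) (b : Bool), μ i (Function.update w j b) = μ i w := by
        intro w b
        have hkey : μ i (Function.update w j b) = μ i (Function.update w j (w j)) := by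
          cases b <;> cases hwj : w j <;>
            first | rfl | exact hdep1 w | exact (hdep1 w).symm
        rw [hkey, Function.update_eq_self]
      have hμj : ∀ (w : Fin N → Bool) (b : Bool), μ j (Function.update w i b) = μ j w := by
        intro w b
        have hkey : μ j (Function.update w i b) = μ j (Function.update w i (w i)) := by
          cases b <;> cases hwi : w i <;>
            first | rfl | exact hdep2 w | exact (hdep2 w).symm
        rw [hkey, Function.update_eq_self]
      have hprod : ∀ a b : Bool,
          bexp p (fun z => μ i (Function.update (Function.update z i a) j b)
            * μ j (Function.update (Function.update z i a) j b))
          = bexp p (fun z => μ i (Function.update z i a))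
            * bexp p (fun z => μ j (Function.update z j b)) := by
        intro a b
        have e : ∀ z : Fin N → Bool,
            μ i (Function.update (Function.update z i a) j b)
              * μ j (Function.update (Function.update z i a) j b)
            = μ i (Function.update z i a) * μ j (Function.update z j b) := by
          intro z
          rw [hμi (Function.update z i a) b]
          congr 1
          rw [Function.update_comm hij]
          exact hμj (Function.update z j b) a
        rw [bexp_congr _ _ _ e]
        have h3 := hdep3 a b
        simp only [bcov] at h3
        linarith
      simp [hprod]
    calc ∑ j ∈ Finset.univ.erase i, (bexp p (fun z => htF p μ i z * htF p μ j z)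
          - bexp p (htF p μ i) * bexp p (htF p μ j))
        = ∑ j ∈ Finset.univ.erase i, (1 / (N:ℝ)^2 * ∑ a : Bool, ∑ b : Bool,
            sgn a * sgn b *
              (bexp p (fun z =>
                  μ i (Function.update (Function.update z i a) j b)
                    * μ j (Function.update (Function.update z i a) j b))
                - bexp p (fun z => μ i (Function.update z i a))
                    * bexp p (fun z => μ j (Function.update z j b)))) :=
          Finset.sum_congr rfl hformula
      _ = ∑ j ∈ (B i).erase i, (1 / (N:ℝ)^2 * ∑ a : Bool, ∑ b : Bool,
            sgn a * sgn b *
              (bexp p (fun z =>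
                  μ i (Function.update (Function.update z i a) j b)
                    * μ j (Function.update (Function.update z i a) j b))
                - bexp p (fun z => μ i (Function.update z i a))
                    * bexp p (fun z => μ j (Function.update z j b)))) :=
          (Finset.sum_subset (Finset.erase_subset_erase _ (Finset.subset_univ _)) hvanish).symm
      _ = _ := by rw [Finset.mul_sum]
  rw [hcross]
  linarith [hdiag]
end

section
/- Approximation bound C4.1: Given a dependency structure B, suppose |μ_i(z)| ≤ b for all i and z, and |B(i)| ≤ c̃ for all i. Then for all a, b' ∈ {0,1}: | (1/N²) Σ_{i=1}^N Σ_{j≠i} E[μ_i(Z[i:=a][j:=b']) μ_j(Z[i:=a][j:=b'])] − (1/N²) Σ_{i=1}^N Σ_{j≠i} E[μ_i^{(a)}(Z)] E[μ_j^{(b')}(Z)] | ≤ 2 c̃ b² / N. -/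
lemma weight_sum {N : ℕ} (p : ℝ) :
    ∑ z : Fin N → Bool, (∏ i, if z i then p else 1 - p) = 1 := by
  have h := Finset.prod_univ_sum (fun _ : Fin N => (Finset.univ : Finset Bool))
    (fun _ b => if b then p else 1 - p)
  rw [← Fintype.piFinset_univ, ← h]
  simp

lemma bexp_abs_le {N : ℕ} {p : ℝ} (hp0 : 0 ≤ p) (hp1 : p ≤ 1)
    {f : (Fin N → Bool) → ℝ} {C : ℝ} (h : ∀ z, |f z| ≤ C) :
    |bexp p f| ≤ C := by
  have hw : ∀ z : Fin N → Bool, 0 ≤ ∏ i, if z i then p else 1 - p := by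
    intro z
    exact Finset.prod_nonneg fun i _ => by split <;> linarith
  calc |bexp p f| ≤ ∑ z : Fin N → Bool, |(∏ i, if z i then p else 1 - p) * f z| :=
        Finset.abs_sum_le_sum_abs _ _
    _ ≤ ∑ z : Fin N → Bool, (∏ i, if z i then p else 1 - p) * C := by
        apply Finset.sum_le_sum
        intro z _
        rw [abs_mul, abs_of_nonneg (hw z)]
        exact mul_le_mul_of_nonneg_left (h z) (hw z)
    _ = C := by rw [← Finset.sum_mul, weight_sum, one_mul]

lemma indep_update {N : ℕ} {f : (Fin N → Bool) → ℝ} {j : Fin N}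
    (h : ∀ z, f (Function.update z j false) = f (Function.update z j true))
    (z : Fin N → Bool) (c : Bool) : f (Function.update z j c) = f z := by
  conv_rhs => rw [← Function.update_eq_self j z]
  cases c <;> cases hz : z j <;> simp only [hz, h z]


/-- Approximation bound C4.1: given a dependency structure with `|μ_i| ≤ b` and
`|B(i)| ≤ c̃`, for all `a, b' ∈ {0,1}`:
`|(1/N²) Σ_i Σ_{j≠i} E[μ_i(Z[i:=a][j:=b']) μ_j(Z[i:=a][j:=b'])]
  − (1/N²) Σ_i Σ_{j≠i} E[μ_i^{(a)}(Z)] E[μ_j^{(b')}(Z)]| ≤ 2 c̃ b²/N`. -/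
theorem approx_bound_C41
    (N : ℕ) (hN : 1 ≤ N) (p : ℝ) (hp0 : 0 < p) (hp1 : p < 1)
    (μ : Fin N → (Fin N → Bool) → ℝ) (B : Fin N → Finset (Fin N))
    (hB : DepStruct p μ B)
    (b : ℝ) (hb : ∀ i z, |μ i z| ≤ b)
    (ctil : ℕ) (hc : ∀ i, (B i).card ≤ ctil)
    (a b' : Bool) :
    |(1 / (N : ℝ) ^ 2) * ∑ i, ∑ j ∈ Finset.univ.erase i,
        bexp p (fun z =>
          μ i (Function.update (Function.update z i a) j b')
            * μ j (Function.update (Function.update z i a) j b'))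
      - (1 / (N : ℝ) ^ 2) * ∑ i, ∑ j ∈ Finset.univ.erase i,
          bexp p (fun z => μ i (Function.update z i a))
            * bexp p (fun z => μ j (Function.update z j b'))|
      ≤ 2 * ctil * b ^ 2 / N := by
  obtain ⟨hBi, hdep⟩ := hB
  have hp0' : (0:ℝ) ≤ p := hp0.le
  have hp1' : p ≤ 1 := hp1.le
  have hb0 : 0 ≤ b := le_trans (abs_nonneg _) (hb ⟨0, hN⟩ (fun _ => false))
  have hNpos : (0:ℝ) < N := by exact_mod_cast hN
  set T : Fin N → Fin N → ℝ := fun i j =>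
    bexp p (fun z =>
      μ i (Function.update (Function.update z i a) j b')
        * μ j (Function.update (Function.update z i a) j b')) with hT
  set S : Fin N → Fin N → ℝ := fun i j =>
    bexp p (fun z => μ i (Function.update z i a))
      * bexp p (fun z => μ j (Function.update z j b')) with hS
  -- zero terms
  have hzero : ∀ i j, j ≠ i → j ∉ B i → T i j - S i j = 0 := by
    intro i j hji hj
    obtain ⟨h1, h2, h3⟩ := hdep i j hj
    have hTe : T i j = bexp p (fun z =>
        μ i (Function.update z i a) * μ j (Function.update z j b')) := by
      simp only [hT]
      congr 1
      funext z
      rw [indep_update h1, Function.update_comm (Ne.symm hji), indep_update h2]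
    rw [hTe, hS]
    have := h3 a b'
    simpa [bcov] using this
  -- bounded terms
  have hbound : ∀ i j, |T i j - S i j| ≤ 2 * b ^ 2 := by
    intro i j
    have hT' : |T i j| ≤ b ^ 2 := by
      apply bexp_abs_le hp0' hp1'
      intro z
      rw [abs_mul, sq]
      exact mul_le_mul (hb _ _) (hb _ _) (abs_nonneg _) hb0
    have hS' : |S i j| ≤ b ^ 2 := by
      have h1 : |bexp p (fun z => μ i (Function.update z i a))| ≤ b :=
        bexp_abs_le hp0' hp1' (fun z => hb i _)
      have h2 : |bexp p (fun z => μ j (Function.update z j b'))| ≤ b :=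
        bexp_abs_le hp0' hp1' (fun z => hb j _)
      rw [hS, abs_mul, sq]
      exact mul_le_mul h1 h2 (abs_nonneg _) hb0
    calc |T i j - S i j| ≤ |T i j| + |S i j| := abs_sub _ _
      _ ≤ 2 * b ^ 2 := by linarith
  -- per-row bound
  have hrow : ∀ i, |∑ j ∈ Finset.univ.erase i, (T i j - S i j)| ≤ ctil * (2 * b ^ 2) := by
    intro i
    calc |∑ j ∈ Finset.univ.erase i, (T i j - S i j)|
        ≤ ∑ j ∈ Finset.univ.erase i, |T i j - S i j| := Finset.abs_sum_le_sum_abs _ _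
      _ = ∑ j ∈ (Finset.univ.erase i).filter (· ∈ B i), |T i j - S i j| := by
          rw [Finset.sum_filter_of_ne]
          intro j hj hne
          by_contra hjB
          exact hne (by rw [hzero i j (Finset.ne_of_mem_erase hj) hjB, abs_zero])
      _ ≤ ∑ _j ∈ (Finset.univ.erase i).filter (· ∈ B i), 2 * b ^ 2 :=
          Finset.sum_le_sum fun j _ => hbound i j
      _ = ((Finset.univ.erase i).filter (· ∈ B i)).card * (2 * b ^ 2) := by
          rw [Finset.sum_const, nsmul_eq_mul]
      _ ≤ ctil * (2 * b ^ 2) := by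
          apply mul_le_mul_of_nonneg_right _ (by positivity)
          have hsub : (Finset.univ.erase i).filter (· ∈ B i) ⊆ B i := by
            intro j hj
            exact (Finset.mem_filter.mp hj).2
          have := le_trans (Finset.card_le_card hsub) (hc i)
          exact_mod_cast this
  -- assemble
  have key : (1 / (N : ℝ) ^ 2) * ∑ i, ∑ j ∈ Finset.univ.erase i, T i j
      - (1 / (N : ℝ) ^ 2) * ∑ i, ∑ j ∈ Finset.univ.erase i, S i j
      = (1 / (N : ℝ) ^ 2) * ∑ i, ∑ j ∈ Finset.univ.erase i, (T i j - S i j) := by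
    rw [← mul_sub, ← Finset.sum_sub_distrib]
    congr 1
    apply Finset.sum_congr rfl
    intro i _
    rw [Finset.sum_sub_distrib]
  rw [key, abs_mul, abs_of_nonneg (by positivity : (0:ℝ) ≤ 1 / (N:ℝ) ^ 2)]
  calc (1 / (N:ℝ) ^ 2) * |∑ i, ∑ j ∈ Finset.univ.erase i, (T i j - S i j)|
      ≤ (1 / (N:ℝ) ^ 2) * ∑ i : Fin N, (ctil * (2 * b ^ 2)) := by
        apply mul_le_mul_of_nonneg_left _ (by positivity)
        exact le_trans (Finset.abs_sum_le_sum_abs _ _) (Finset.sum_le_sum fun i _ => hrow i)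
    _ = (1 / (N:ℝ) ^ 2) * (N * (ctil * (2 * b ^ 2))) := by
        rw [Finset.sum_const, Finset.card_univ, Fintype.card_fin, nsmul_eq_mul]
    _ = 2 * ctil * b ^ 2 / N := by
        field_simp
end
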